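/- For every Young diagram λ, the number ℓ(Y_λ) of covering pairs (μ, μ') of Young diagrams with μ ⋖ μ' and μ' ⊆ λ equals Σ_{(i,j) ∈ λ} |Y_{λ^↙(i,j)}| · |Y_{λ^↗(i,j)}|, where the sum runs over all cells (i,j) of λ, |Y_ν| denotes the number of Young diagrams contained in the Young diagram ν, λ^↙(i,j) is the Young diagram with cell set {(a,b) : (a+i+1, b) ∈ λ and b < j}, and λ^↗(i,j) is the Young diagram with cell set {(a,b) : a < i and (a, b+j+1) ∈ λ}. -/

import Mathlib

open Finset

namespace YoungAux

open scoped Classical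

/-- The predicate describing the cells of the diagram glued together from the rectangle
determined by `(i,j)`, a diagram `α` placed below row `i`, and a diagram `β` placed
to the right of column `j`. -/
def P (i j : ℕ) (α β : YoungDiagram) (d : ℕ × ℕ) : Prop :=
  (d.1 < i ∧ d.2 ≤ j) ∨ (d.1 ≤ i ∧ d.2 < j) ∨ (i < d.1 ∧ (d.1 - i - 1, d.2) ∈ α) ∨
    (j < d.2 ∧ (d.1, d.2 - j - 1) ∈ β)

lemma P_mk {i j : ℕ} {α β : YoungDiagram} {a b : ℕ} :
    P i j α β (a, b) ↔
      (a < i ∧ b ≤ j) ∨ (a ≤ i ∧ b < j) ∨ (i < a ∧ (a - i - 1, b) ∈ α) ∨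
        (j < b ∧ (a, b - j - 1) ∈ β) := Iff.rfl

variable {l : YoungDiagram} {i j : ℕ} {α β : YoungDiagram}

lemma P_lower (hα : ∀ d ∈ α.cells, (d.1 + i + 1, d.2) ∈ l ∧ d.2 < j)
    (hβ : ∀ d ∈ β.cells, d.1 < i ∧ (d.1, d.2 + j + 1) ∈ l) :
    ∀ ⦃y x : ℕ × ℕ⦄, y ≤ x → P i j α β x → P i j α β y := by
  rintro ⟨a', b'⟩ ⟨a, b⟩ ⟨h1, h2⟩ hx
  simp only [P_mk] at hx ⊢
  simp only at h1 h2
  rcases hx with ⟨hx1, hx2⟩ | ⟨hx1, hx2⟩ | ⟨hx1, hx2⟩ | ⟨hx1, hx2⟩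
  · exact Or.inl ⟨lt_of_le_of_lt h1 hx1, le_trans h2 hx2⟩
  · exact Or.inr (Or.inl ⟨le_trans h1 hx1, lt_of_le_of_lt h2 hx2⟩)
  · have hb : b < j := (hα _ hx2).2
    by_cases h : i < a'
    · exact Or.inr (Or.inr (Or.inl ⟨h, α.up_left_mem (by omega) h2 hx2⟩))
    · exact Or.inr (Or.inl ⟨by omega, by omega⟩)
  · have ha : a < i := (hβ _ hx2).1
    by_cases h : j < b'
    · exact Or.inr (Or.inr (Or.inr ⟨h, β.up_left_mem h1 (by omega) hx2⟩))
    · exact Or.inl ⟨by omega, by omega⟩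

/-- The diagram glued from the rectangle at `(i,j)`, `α` below and `β` to the right. -/
noncomputable def glue (l : YoungDiagram) (i j : ℕ) (α β : YoungDiagram)
    (hα : ∀ d ∈ α.cells, (d.1 + i + 1, d.2) ∈ l ∧ d.2 < j)
    (hβ : ∀ d ∈ β.cells, d.1 < i ∧ (d.1, d.2 + j + 1) ∈ l) : YoungDiagram where
  cells := l.cells.filter (P i j α β)
  isLowerSet := by
    intro x y hle hx
    simp only [Finset.coe_filter, Set.mem_setOf_eq, YoungDiagram.mem_cells] at hx ⊢
    exact ⟨l.isLowerSet hle hx.1, P_lower hα hβ hle hx.2⟩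

lemma mem_glue (hα : ∀ d ∈ α.cells, (d.1 + i + 1, d.2) ∈ l ∧ d.2 < j)
    (hβ : ∀ d ∈ β.cells, d.1 < i ∧ (d.1, d.2 + j + 1) ∈ l) {d : ℕ × ℕ} :
    d ∈ glue l i j α β hα hβ ↔ d ∈ l ∧ P i j α β d := by
  exact Finset.mem_filter

lemma not_mem_glue (hα : ∀ d ∈ α.cells, (d.1 + i + 1, d.2) ∈ l ∧ d.2 < j)
    (hβ : ∀ d ∈ β.cells, d.1 < i ∧ (d.1, d.2 + j + 1) ∈ l) :
    (i, j) ∉ glue l i j α β hα hβ := by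
  rw [mem_glue]
  rintro ⟨-, h⟩
  rcases h with ⟨h, -⟩ | ⟨-, h⟩ | ⟨h, -⟩ | ⟨h, -⟩ <;> simp at h

lemma mem_glue_sw (hα : ∀ d ∈ α.cells, (d.1 + i + 1, d.2) ∈ l ∧ d.2 < j)
    (hβ : ∀ d ∈ β.cells, d.1 < i ∧ (d.1, d.2 + j + 1) ∈ l) {a b : ℕ} :
    (a + i + 1, b) ∈ glue l i j α β hα hβ ↔ (a, b) ∈ α := by
  rw [mem_glue]
  constructor
  · rintro ⟨-, h⟩
    rw [P_mk] at h
    rcases h with ⟨h, -⟩ | ⟨h, -⟩ | ⟨-, h⟩ | ⟨-, h⟩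
    · omega
    · omega
    · rwa [show a + i + 1 - i - 1 = a by omega] at h
    · have := (hβ _ h).1; omega
  · intro h
    refine ⟨(hα _ h).1, ?_⟩
    rw [P_mk]
    exact Or.inr (Or.inr (Or.inl ⟨by omega,
      by rwa [show a + i + 1 - i - 1 = a by omega]⟩))

lemma mem_glue_ne (hα : ∀ d ∈ α.cells, (d.1 + i + 1, d.2) ∈ l ∧ d.2 < j)
    (hβ : ∀ d ∈ β.cells, d.1 < i ∧ (d.1, d.2 + j + 1) ∈ l) {a b : ℕ} :
    (a, b + j + 1) ∈ glue l i j α β hα hβ ↔ (a, b) ∈ β := by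
  rw [mem_glue]
  constructor
  · rintro ⟨-, h⟩
    rw [P_mk] at h
    rcases h with ⟨-, h⟩ | ⟨-, h⟩ | ⟨-, h⟩ | ⟨-, h⟩
    · omega
    · omega
    · have := (hα _ h).2; omega
    · rwa [show b + j + 1 - j - 1 = b by omega] at h
  · intro h
    refine ⟨(hβ _ h).2, ?_⟩
    rw [P_mk]
    exact Or.inr (Or.inr (Or.inr ⟨by omega,
      by rwa [show b + j + 1 - j - 1 = b by omega]⟩))

/-- The glued diagram together with the cell `(i,j)` itself. -/
noncomputable def glue' (l : YoungDiagram) (i j : ℕ) (α β : YoungDiagram)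
    (hα : ∀ d ∈ α.cells, (d.1 + i + 1, d.2) ∈ l ∧ d.2 < j)
    (hβ : ∀ d ∈ β.cells, d.1 < i ∧ (d.1, d.2 + j + 1) ∈ l)
    (hc : (i, j) ∈ l) : YoungDiagram where
  cells := insert (i, j) (glue l i j α β hα hβ).cells
  isLowerSet := by
    intro x y hle hx
    simp only [Finset.coe_insert, Set.mem_insert_iff, YoungDiagram.mem_cells] at hx ⊢
    rcases hx with rfl | hx
    · rcases eq_or_ne y (i, j) with rfl | hne
      · exact Or.inl rfl
      · refine Or.inr ?_
        rw [Finset.mem_coe, YoungDiagram.mem_cells, mem_glue]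
        obtain ⟨a, b⟩ := y
        obtain ⟨h1, h2⟩ := hle
        simp only at h1 h2
        refine ⟨l.up_left_mem h1 h2 hc, ?_⟩
        rw [P_mk]
        have : ¬(a = i ∧ b = j) := by
          rintro ⟨rfl, rfl⟩; exact hne rfl
        rcases Nat.lt_or_ge a i with h | h
        · exact Or.inl ⟨h, h2⟩
        · exact Or.inr (Or.inl ⟨h1, by omega⟩)
    · exact Or.inr ((glue l i j α β hα hβ).isLowerSet hle hx)

/-- Characterization of covering pairs of Young diagrams. -/
lemma covBy_iff' {μ ν : YoungDiagram} :
    μ ⋖ ν ↔ ∃ c, c ∉ μ.cells ∧ ν.cells = insert c μ.cells := by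
  constructor
  · intro h
    have hlt : μ < ν := h.1
    have hS : (ν.cells \ μ.cells).Nonempty := by
      rw [Finset.sdiff_nonempty]
      intro hsub
      exact hlt.not_ge (YoungDiagram.cells_subset_iff.mp hsub)
    obtain ⟨c, hcmem, hcmin⟩ := Finset.exists_min_image _ (fun d => d.1 + d.2) hS
    obtain ⟨hcν, hcμ⟩ := Finset.mem_sdiff.mp hcmem
    have hμν : μ.cells ⊆ ν.cells := YoungDiagram.cells_subset_iff.mpr hlt.le
    set τ : YoungDiagram := ⟨insert c μ.cells, by
      intro x y hle hx
      simp only [Finset.coe_insert, Set.mem_insert_iff, YoungDiagram.mem_cells] at hx ⊢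
      rcases hx with rfl | hx
      · have hyν : y ∈ ν.cells := ν.isLowerSet hle hcν
        by_cases hyμ : y ∈ μ.cells
        · exact Or.inr hyμ
        · have hy : y ∈ ν.cells \ μ.cells := Finset.mem_sdiff.mpr ⟨hyν, hyμ⟩
          have := hcmin y hy
          obtain ⟨h1, h2⟩ := hle
          left
          have e1 : y.1 = x.1 := by omega
          have e2 : y.2 = x.2 := by omega
          exact Prod.ext e1 e2
      · exact Or.inr (μ.isLowerSet hle hx)⟩ with hτ
    have h1 : μ < τ := by
      rw [← YoungDiagram.cells_ssubset_iff]
      exact Finset.ssubset_insert hcμ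
    have h2 : τ ≤ ν := by
      rw [← YoungDiagram.cells_subset_iff]
      exact Finset.insert_subset hcν hμν
    have h3 : τ = ν := eq_of_le_of_not_lt h2 (h.2 h1)
    exact ⟨c, hcμ, by rw [← h3]⟩
  · rintro ⟨c, hc, hcells⟩
    constructor
    · rw [← YoungDiagram.cells_ssubset_iff, hcells]
      exact Finset.ssubset_insert hc
    · intro τ h1 h2
      have hsub : τ.cells ⊂ ν.cells := YoungDiagram.cells_ssubset_iff.mpr h2
      have hsub1 : μ.cells ⊂ τ.cells := YoungDiagram.cells_ssubset_iff.mpr h1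
      obtain ⟨x, hxτ, hxμ⟩ := Finset.exists_of_ssubset hsub1
      have hxν : x ∈ ν.cells := hsub.1 hxτ
      rw [hcells, Finset.mem_insert] at hxν
      rcases hxν with rfl | hxν
      · have : ν.cells ⊆ τ.cells := by
          rw [hcells]
          exact Finset.insert_subset hxτ hsub1.1
        exact absurd this hsub.not_subset
      · exact hxμ hxν

/-- The type of edges of the Young lattice below `l`. -/
abbrev E (l : YoungDiagram) := {p : YoungDiagram × YoungDiagram // p.1 ⋖ p.2 ∧ p.2 ≤ l}

/-- The type of triples (cell, SW diagram, NE diagram). -/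
abbrev T (l : YoungDiagram) :=
  (c : {x : ℕ × ℕ // x ∈ l.cells}) ×
    ({μ : YoungDiagram // ∀ d ∈ μ.cells, (d.1 + c.1.1 + 1, d.2) ∈ l ∧ d.2 < c.1.2} ×
      {μ : YoungDiagram // ∀ d ∈ μ.cells, d.1 < c.1.1 ∧ (d.1, d.2 + c.1.2 + 1) ∈ l})

/-- The forward map from triples to edges. -/
noncomputable def fwd (l : YoungDiagram) (t : T l) : E l := by
  refine ⟨(glue l t.1.1.1 t.1.1.2 t.2.1.1 t.2.2.1 t.2.1.2 t.2.2.2,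
    glue' l t.1.1.1 t.1.1.2 t.2.1.1 t.2.2.1 t.2.1.2 t.2.2.2 t.1.2), ?_, ?_⟩
  · rw [covBy_iff']
    exact ⟨(t.1.1.1, t.1.1.2), not_mem_glue t.2.1.2 t.2.2.2, rfl⟩
  · rw [← YoungDiagram.cells_subset_iff]
    show insert (t.1.1.1, t.1.1.2) _ ⊆ l.cells
    refine Finset.insert_subset t.1.2 ?_
    intro d hd
    exact ((mem_glue t.2.1.2 t.2.2.2).mp hd).1

lemma fwd_injective (l : YoungDiagram) : Function.Injective (fwd l) := by
  rintro ⟨⟨⟨i, j⟩, hc⟩, ⟨α, hα⟩, ⟨β, hβ⟩⟩ ⟨⟨⟨i', j'⟩, hc'⟩, ⟨α', hα'⟩, ⟨β', hβ'⟩⟩ h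
  simp only [fwd, Subtype.mk.injEq, Prod.mk.injEq] at h
  obtain ⟨h1, h2⟩ := h
  have hij : (i, j) = (i', j') := by
    have hm : (i', j') ∈ insert (i, j) (glue l i j α β hα hβ).cells := by
      have : (glue' l i j α β hα hβ hc).cells = (glue' l i' j' α' β' hα' hβ' hc').cells := by
        rw [h2]
      rw [show insert (i, j) (glue l i j α β hα hβ).cells
          = (glue' l i j α β hα hβ hc).cells from rfl, this]
      exact Finset.mem_insert_self _ _
    rcases Finset.mem_insert.mp hm with h | h
    · exact h.symm
    · exfalso
      rw [h1] at h
      exact not_mem_glue hα' hβ' h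
  obtain ⟨rfl, rfl⟩ : i = i' ∧ j = j' := by
    simpa [Prod.ext_iff] using hij
  have hαα : α = α' := by
    apply YoungDiagram.ext
    ext ⟨a, b⟩
    rw [YoungDiagram.mem_cells, YoungDiagram.mem_cells,
      ← mem_glue_sw hα hβ, h1, mem_glue_sw]
  have hββ : β = β' := by
    apply YoungDiagram.ext
    ext ⟨a, b⟩
    rw [YoungDiagram.mem_cells, YoungDiagram.mem_cells,
      ← mem_glue_ne hα hβ, h1, mem_glue_ne]
  subst hαα; subst hββ
  rfl

lemma fwd_surjective (l : YoungDiagram) : Function.Surjective (fwd l) := by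
  rintro ⟨⟨μ, ν⟩, hcov, hle⟩
  obtain ⟨⟨i, j⟩, hcμ, hcells⟩ := covBy_iff'.mp hcov
  have hμl : μ ≤ l := hcov.le.trans hle
  have hμl' : μ.cells ⊆ l.cells := YoungDiagram.cells_subset_iff.mpr hμl
  have hcν : (i, j) ∈ ν.cells := by rw [hcells]; exact Finset.mem_insert_self _ _
  have hcl : (i, j) ∈ l := (YoungDiagram.cells_subset_iff.mpr hle) hcν
  set α : YoungDiagram := ⟨l.cells.filter (fun d => (d.1 + i + 1, d.2) ∈ μ), by
    intro x y hxy hx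
    simp only [Finset.coe_filter, Set.mem_setOf_eq, YoungDiagram.mem_cells] at hx ⊢
    exact ⟨l.isLowerSet hxy hx.1, μ.up_left_mem (by have := hxy.1; omega) hxy.2 hx.2⟩⟩ with hαdef
  set β : YoungDiagram := ⟨l.cells.filter (fun d => (d.1, d.2 + j + 1) ∈ μ), by
    intro x y hxy hx
    simp only [Finset.coe_filter, Set.mem_setOf_eq, YoungDiagram.mem_cells] at hx ⊢
    exact ⟨l.isLowerSet hxy hx.1, μ.up_left_mem hxy.1 (by have := hxy.2; omega) hx.2⟩⟩ with hβdef
  have hα : ∀ d ∈ α.cells, (d.1 + i + 1, d.2) ∈ l ∧ d.2 < j := by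
    intro d hd
    rw [hαdef] at hd
    simp only [Finset.mem_filter] at hd
    refine ⟨hμl' hd.2, ?_⟩
    by_contra h
    exact hcμ (μ.up_left_mem (by omega) (by omega) hd.2)
  have hβ : ∀ d ∈ β.cells, d.1 < i ∧ (d.1, d.2 + j + 1) ∈ l := by
    intro d hd
    rw [hβdef] at hd
    simp only [Finset.mem_filter] at hd
    refine ⟨?_, hμl' hd.2⟩
    by_contra h
    exact hcμ (μ.up_left_mem (by omega) (by omega) hd.2)
  have hglue : glue l i j α β hα hβ = μ := by
    apply YoungDiagram.ext
    ext ⟨a, b⟩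
    simp only [glue, Finset.mem_filter]
    constructor
    · rintro ⟨hl, hP⟩
      rw [P_mk] at hP
      rcases hP with ⟨h1, h2⟩ | ⟨h1, h2⟩ | ⟨h1, h2⟩ | ⟨h1, h2⟩
      · have : (a, b) ∈ ν.cells := ν.up_left_mem (by omega) h2 hcν
        rw [hcells, Finset.mem_insert] at this
        rcases this with h | h
        · exfalso; rw [Prod.ext_iff] at h; omega
        · exact h
      · have : (a, b) ∈ ν.cells := ν.up_left_mem h1 (by omega) hcν
        rw [hcells, Finset.mem_insert] at this
        rcases this with h | h
        · exfalso; rw [Prod.ext_iff] at h; omega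
        · exact h
      · rw [hαdef] at h2
        replace h2 := Finset.mem_filter.mp h2
        have := h2.2
        rwa [show a - i - 1 + i + 1 = a by omega] at this
      · rw [hβdef] at h2
        replace h2 := Finset.mem_filter.mp h2
        have := h2.2
        rwa [show b - j - 1 + j + 1 = b by omega] at this
    · intro h
      refine ⟨hμl' h, ?_⟩
      rw [P_mk]
      by_cases ha : i < a
      · refine Or.inr (Or.inr (Or.inl ⟨ha, ?_⟩))
        rw [hαdef]
        refine Finset.mem_filter.mpr ?_
        constructor
        · exact l.up_left_mem (by omega) (le_refl _) (hμl' h)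
        · rwa [show a - i - 1 + i + 1 = a by omega]
      · by_cases hb : j < b
        · refine Or.inr (Or.inr (Or.inr ⟨hb, ?_⟩))
          rw [hβdef]
          refine Finset.mem_filter.mpr ?_
          constructor
          · exact l.up_left_mem (le_refl _) (by omega) (hμl' h)
          · rwa [show b - j - 1 + j + 1 = b by omega]
        · have hne : ¬(a = i ∧ b = j) := by
            rintro ⟨rfl, rfl⟩
            exact hcμ h
          rcases Nat.lt_or_ge a i with h' | h'
          · exact Or.inl ⟨h', by omega⟩
          · exact Or.inr (Or.inl ⟨by omega, by omega⟩)
  refine ⟨⟨⟨(i, j), hcl⟩, ⟨α, hα⟩, ⟨β, hβ⟩⟩, ?_⟩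
  apply Subtype.ext
  apply Prod.ext
  · exact hglue
  · apply YoungDiagram.ext
    show insert (i, j) (glue l i j α β hα hβ).cells = ν.cells
    rw [congrArg YoungDiagram.cells hglue, hcells]

lemma finite_sub (l : YoungDiagram) (p : YoungDiagram → Prop)
    (hp : ∀ μ, p μ → μ.cells ⊆ l.cells) : Finite {μ : YoungDiagram // p μ} := by
  apply Finite.of_injective
    (fun μ => (⟨μ.1.cells, Finset.mem_powerset.mpr (hp μ.1 μ.2)⟩ :
      {s : Finset (ℕ × ℕ) // s ∈ l.cells.powerset}))
  intro x y h
  exact Subtype.ext (YoungDiagram.ext (congrArg Subtype.val h))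

lemma finite_A (l : YoungDiagram) (i j : ℕ) :
    Finite {μ : YoungDiagram // ∀ d ∈ μ.cells, (d.1 + i + 1, d.2) ∈ l ∧ d.2 < j} := by
  apply finite_sub
  intro μ h d hd
  exact l.up_left_mem (by omega) (le_refl _) ((h d hd).1)

lemma finite_B (l : YoungDiagram) (i j : ℕ) :
    Finite {μ : YoungDiagram // ∀ d ∈ μ.cells, d.1 < i ∧ (d.1, d.2 + j + 1) ∈ l} := by
  apply finite_sub
  intro μ h d hd
  exact l.up_left_mem (le_refl _) (by omega) ((h d hd).2)

end YoungAux

/-- The number of edges of the Hasse diagram of the Young lattice `Y_λ` of all Young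
diagrams contained in `λ`: the number of covering pairs `(μ, μ')` of Young diagrams
with `μ ⋖ μ'` and `μ' ⊆ λ`. -/
noncomputable def youngEdges (l : YoungDiagram) : ℕ :=
  Nat.card {p : YoungDiagram × YoungDiagram // p.1 ⋖ p.2 ∧ p.2 ≤ l}

/-- The number of Young diagrams contained in `λ^↙(i,j)`, the Young diagram with cell
set `{(a,b) : (a+i+1, b) ∈ λ and b < j}`; a Young diagram is contained in it exactly
when all its cells lie in this set. -/
noncomputable def countSW (l : YoungDiagram) (i j : ℕ) : ℕ :=
  Nat.card {μ : YoungDiagram // ∀ d ∈ μ.cells, (d.1 + i + 1, d.2) ∈ l ∧ d.2 < j}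

/-- The number of Young diagrams contained in `λ^↗(i,j)`, the Young diagram with cell
set `{(a,b) : a < i and (a, b+j+1) ∈ λ}`; a Young diagram is contained in it exactly
when all its cells lie in this set. -/
noncomputable def countNE (l : YoungDiagram) (i j : ℕ) : ℕ :=
  Nat.card {μ : YoungDiagram // ∀ d ∈ μ.cells, d.1 < i ∧ (d.1, d.2 + j + 1) ∈ l}

/-- The number of edges of the Hasse diagram of the Young lattice `Y_λ` equals
`Σ_{(i,j) ∈ λ} |Y_{λ^↙(i,j)}| · |Y_{λ^↗(i,j)}|`. -/
theorem youngEdges_eq_sum (l : YoungDiagram) :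
    youngEdges l = ∑ c ∈ l.cells, countSW l c.1 c.2 * countNE l c.1 c.2 := by
  classical
  haveI hA : ∀ c : {x : ℕ × ℕ // x ∈ l.cells},
      Finite {μ : YoungDiagram // ∀ d ∈ μ.cells, (d.1 + c.1.1 + 1, d.2) ∈ l ∧ d.2 < c.1.2} :=
    fun c => YoungAux.finite_A l c.1.1 c.1.2
  haveI hB : ∀ c : {x : ℕ × ℕ // x ∈ l.cells},
      Finite {μ : YoungDiagram // ∀ d ∈ μ.cells, d.1 < c.1.1 ∧ (d.1, d.2 + c.1.2 + 1) ∈ l} :=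
    fun c => YoungAux.finite_B l c.1.1 c.1.2
  have key : youngEdges l = Nat.card (YoungAux.T l) := by
    unfold youngEdges
    exact (Nat.card_congr (Equiv.ofBijective (YoungAux.fwd l)
      ⟨YoungAux.fwd_injective l, YoungAux.fwd_surjective l⟩)).symm
  rw [key]
  haveI : ∀ c : {x : ℕ × ℕ // x ∈ l.cells},
      Fintype ({μ : YoungDiagram // ∀ d ∈ μ.cells, (d.1 + c.1.1 + 1, d.2) ∈ l ∧ d.2 < c.1.2} ×
        {μ : YoungDiagram // ∀ d ∈ μ.cells, d.1 < c.1.1 ∧ (d.1, d.2 + c.1.2 + 1) ∈ l}) :=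
    fun c => Fintype.ofFinite _
  rw [Nat.card_eq_fintype_card, Fintype.card_sigma]
  have step : ∀ c : {x : ℕ × ℕ // x ∈ l.cells},
      Fintype.card
        ({μ : YoungDiagram // ∀ d ∈ μ.cells, (d.1 + c.1.1 + 1, d.2) ∈ l ∧ d.2 < c.1.2} ×
          {μ : YoungDiagram // ∀ d ∈ μ.cells, d.1 < c.1.1 ∧ (d.1, d.2 + c.1.2 + 1) ∈ l})
        = countSW l c.1.1 c.1.2 * countNE l c.1.1 c.1.2 := by
    intro c
    rw [← Nat.card_eq_fintype_card, Nat.card_prod, countSW, countNE]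
  rw [Finset.sum_congr rfl (fun c _ => step c)]
  exact Finset.sum_coe_sort l.cells (fun c => countSW l c.1 c.2 * countNE l c.1 c.2)
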